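/- The function 𝓔(x) = φ(x)/Φ̄(x) satisfies, for all x ∈ ℝ: (a) max{0,x} < 𝓔(x) < 1 + |x|; (b) 𝓔′(x) = 𝓔(x)(𝓔(x) − x) and 𝓔′(x) ∈ (0,1); (c) 𝓔″(x) = 𝓔(x)·[(2𝓔(x) − x)(𝓔(x) − x) − 1] and 𝓔″(x) ∈ (0,1); (d) 𝓔‴(x) = −2(1 − 𝓔′(x))𝓔′(x) + (2𝓔(x) − x)𝓔″(x) and 𝓔‴(x) ∈ (−1/2, 13). -/

import Mathlib

open MeasureTheory Real Set Filter
open Topology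

noncomputable section

/-- The standard gaussian density `φ(x) = exp(-x²/2)/√(2π)`. -/
def gphi (x : ℝ) : ℝ := Real.exp (-x ^ 2 / 2) / Real.sqrt (2 * Real.pi)

/-- The complementary gaussian distribution function `Φ̄(x) = ∫_x^∞ φ(u) du`. -/
def Phibar (x : ℝ) : ℝ := ∫ u in Set.Ioi x, gphi u

/-- `𝓔(x) = φ(x) / Φ̄(x)`. -/
def gaussE (x : ℝ) : ℝ := gphi x / Phibar x

/-- `F_q(x) = 𝓔((κ - x)/√(1-q)) / √(1-q)` (with threshold `κ`). -/
def Fq (κ q x : ℝ) : ℝ := gaussE ((κ - x) / Real.sqrt (1 - q)) / Real.sqrt (1 - q)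

/-- `P(ψ) = ∫ tanh(√ψ z)² φ(z) dz`. -/
def Pfun (ψ : ℝ) : ℝ := ∫ z : ℝ, Real.tanh (Real.sqrt ψ * z) ^ 2 * gphi z

/-- `R_κ(q, α) = α ∫ F_q(√q z)² φ(z) dz`. -/
def Rfun (κ q α : ℝ) : ℝ := α * ∫ z : ℝ, Fq κ q (Real.sqrt q * z) ^ 2 * gphi z

/-- `𝒢_κ(α, q, ψ)`. -/
def Gfun (κ α q ψ : ℝ) : ℝ :=
  -(ψ * (1 - q)) / 2 + (∫ z : ℝ, Real.log (2 * Real.cosh (Real.sqrt ψ * z)) * gphi z)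
    + α * ∫ z : ℝ, Real.log (Phibar ((κ - Real.sqrt q * z) / Real.sqrt (1 - q))) * gphi z

def alphaLB : ℝ := 0.833078599
def alphaUB : ℝ := 0.833078600
def qLB : ℝ := 0.56394907949
def qLU : ℝ := 0.56394907950
def qUL : ℝ := 0.56394908029
def qUB : ℝ := 0.56394908030
def psiLB : ℝ := 2.5763513100
def psiLU : ℝ := 2.5763513103
def psiUL : ℝ := 2.5763513221
def psiUB : ℝ := 2.5763513224

lemma sqrt2pi_pos : 0 < Real.sqrt (2 * Real.pi) := Real.sqrt_pos.2 (by positivity)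

lemma gphi_pos (x : ℝ) : 0 < gphi x := div_pos (Real.exp_pos _) sqrt2pi_pos

lemma continuous_gphi : Continuous gphi := by
  unfold gphi
  exact (Real.continuous_exp.comp (by continuity)).div_const _

lemma hasDerivAt_gphi (x : ℝ) : HasDerivAt gphi (-x * gphi x) x := by
  have h : HasDerivAt (fun y : ℝ => -y ^ 2 / 2) (-x) x := by
    have := ((hasDerivAt_pow 2 x).neg).div_const 2
    refine this.congr_deriv (Eq.symm ?_)
    ring
  have h2 := (h.exp).div_const (Real.sqrt (2 * Real.pi))
  refine h2.congr_deriv (Eq.symm ?_)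
  unfold gphi; ring

lemma integrable_gphi : Integrable gphi := by
  have h : Integrable (fun u : ℝ => Real.exp (-(1/2) * u ^ 2)) :=
    integrable_exp_neg_mul_sq (by norm_num)
  have h2 := h.div_const (Real.sqrt (2 * Real.pi))
  refine h2.congr (Filter.Eventually.of_forall fun u => ?_)
  unfold gphi; ring_nf

lemma Phibar_eq (y : ℝ) : Phibar y = Phibar 0 - ∫ t in (0:ℝ)..y, gphi t := by
  have key : ∀ z : ℝ, Phibar z = (∫ u, gphi u) - ∫ u in Iic z, gphi u := by
    intro z
    have := MeasureTheory.integral_add_compl (measurableSet_Iic (a := z)) integrable_gphi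
    rw [compl_Iic] at this
    unfold Phibar; linarith
  have h3 := intervalIntegral.integral_Iic_sub_Iic (μ := volume) (f := gphi)
    (a := (0:ℝ)) (b := y) integrable_gphi.integrableOn integrable_gphi.integrableOn
  rw [key y, key 0, ← h3]
  ring
lemma hasDerivAt_Phibar (x : ℝ) : HasDerivAt Phibar (-gphi x) x := by
  have h : HasDerivAt (fun y : ℝ => Phibar 0 - ∫ t in (0:ℝ)..y, gphi t) (-gphi x) x := by
    have h2 := (continuous_gphi.integral_hasStrictDerivAt 0 x).hasDerivAt
    simpa using (h2.const_sub (Phibar 0))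
  exact h.congr_of_eventuallyEq (Filter.Eventually.of_forall fun y => Phibar_eq y)

lemma Phibar_pos (x : ℝ) : 0 < Phibar x := by
  unfold Phibar
  rw [setIntegral_pos_iff_support_of_nonneg_ae
    (Filter.Eventually.of_forall fun u => (gphi_pos u).le) integrable_gphi.integrableOn]
  have hs : Function.support gphi ∩ Ioi x = Ioi x := by
    ext u; simp [Function.mem_support, (gphi_pos u).ne']
  rw [hs, Real.volume_Ioi]
  simp

lemma tendsto_Phibar_atTop : Tendsto Phibar atTop (𝓝 0) := by
  have h := MeasureTheory.intervalIntegral_tendsto_integral_Ioi 0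
    integrable_gphi.integrableOn tendsto_id
  have h2 : Tendsto (fun y => Phibar 0 - ∫ t in (0:ℝ)..y, gphi t) atTop (𝓝 (Phibar 0 - Phibar 0)) :=
    tendsto_const_nhds.sub h
  rw [sub_self] at h2
  exact h2.congr fun y => (Phibar_eq y).symm

lemma tendsto_gphi_atTop : Tendsto gphi atTop (𝓝 0) := by
  have h : Tendsto (fun x : ℝ => -x ^ 2 / 2) atTop atBot := by
    have h0 : Tendsto (fun x : ℝ => x ^ 2) atTop atTop := tendsto_pow_atTop (by norm_num)
    have h1 := Tendsto.atTop_mul_const_of_neg (show (-(1:ℝ)/2) < 0 by norm_num) h0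
    refine h1.congr fun y => by ring
  have := (Real.tendsto_exp_atBot.comp h).div_const (Real.sqrt (2 * Real.pi))
  unfold gphi
  simpa only [Function.comp_def, zero_div] using this
lemma integrable_id_mul_gphi : Integrable (fun u : ℝ => u * gphi u) := by
  have h : Integrable (fun u : ℝ => u ^ (1:ℝ) * Real.exp (-(1/2) * u ^ 2)) :=
    integrable_rpow_mul_exp_neg_mul_sq (by norm_num) (by norm_num)
  have h2 := h.div_const (Real.sqrt (2 * Real.pi))
  refine h2.congr (Filter.Eventually.of_forall fun u => ?_)
  simp only [Real.rpow_one]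
  unfold gphi; ring_nf

lemma integral_id_mul_gphi_Ioi (x : ℝ) : ∫ u in Ioi x, u * gphi u = gphi x := by
  have h := MeasureTheory.integral_Ioi_of_hasDerivAt_of_tendsto'
    (f := fun u => -gphi u) (f' := fun u => u * gphi u) (a := x)
    (fun u _ => ((hasDerivAt_gphi u).neg).congr_deriv (by ring))
    integrable_id_mul_gphi.integrableOn tendsto_gphi_atTop.neg
  rw [h]; simp

lemma Phibar_le_gphi_div (x : ℝ) (hx : 0 < x) : x * Phibar x ≤ gphi x := by
  rw [← integral_id_mul_gphi_Ioi x]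
  unfold Phibar
  rw [← MeasureTheory.integral_const_mul]
  refine MeasureTheory.setIntegral_mono_on
    (integrable_gphi.integrableOn.const_mul x) integrable_id_mul_gphi.integrableOn
    measurableSet_Ioi fun u hu => ?_
  have : x ≤ u := le_of_lt hu
  nlinarith [gphi_pos u]

lemma tendsto_mul_Phibar_atTop : Tendsto (fun x => x * Phibar x) atTop (𝓝 0) := by
  apply squeeze_zero' (g := gphi)
  · filter_upwards [eventually_ge_atTop (0:ℝ)] with x hx
    exact mul_nonneg hx (Phibar_pos x).le
  · filter_upwards [eventually_gt_atTop (0:ℝ)] with x hx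
    exact Phibar_le_gphi_div x hx
  · exact tendsto_gphi_atTop

/-- Generic: a function with negative derivative on `[x,∞)` tending to `0` at `∞` is
positive at `x`. -/
lemma pos_of_deriv_neg_tendsto {f f' : ℝ → ℝ} {x : ℝ}
    (hd : ∀ y ∈ Ici x, HasDerivAt f (f' y) y)
    (hneg : ∀ y ∈ Ici x, f' y < 0)
    (hlim : Tendsto f atTop (𝓝 0)) : 0 < f x := by
  have anti : StrictAntiOn f (Ici x) := by
    refine strictAntiOn_of_hasDerivWithinAt_neg (convex_Ici x)
      (fun y hy => (hd y hy).continuousAt.continuousWithinAt)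
      (fun y hy => (hd y (interior_subset hy)).hasDerivWithinAt)
      (fun y hy => hneg y (interior_subset hy))
  have h1 : 0 ≤ f (x + 1) := by
    refine le_of_tendsto hlim ?_
    filter_upwards [eventually_ge_atTop (x + 1)] with y hy
    rcases eq_or_lt_of_le hy with rfl | hlt
    · exact le_refl _
    · exact (anti (by simp : x + 1 ∈ Ici x)
        (show y ∈ Ici x by simp only [mem_Ici]; linarith) hlt).le
  have h2 : f (x + 1) < f x := anti self_mem_Ici (by simp) (by linarith)
  linarith
/-- `𝓔(x) > x`, i.e. `x·Φ̄(x) < φ(x)`, for all real `x`. -/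
lemma xPhibar_lt_gphi (x : ℝ) : x * Phibar x < gphi x := by
  have h := pos_of_deriv_neg_tendsto (f := fun y => gphi y - y * Phibar y)
    (f' := fun y => -Phibar y) (x := x)
    (fun y _ => by
      have h1 := (hasDerivAt_gphi y).sub ((hasDerivAt_id y).mul (hasDerivAt_Phibar y))
      refine h1.congr_deriv (Eq.symm ?_)
      simp only [id_eq]
      ring)
    (fun y _ => neg_neg_iff_pos.2 (Phibar_pos y))
    (by simpa using tendsto_gphi_atTop.sub tendsto_mul_Phibar_atTop)
  have h2 : 0 < gphi x - x * Phibar x := h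
  linarith

/-- helper: derivative of `√(y² + c)` -/
lemma hasDerivAt_sqrt_sq_add (c : ℝ) (hc : 0 < c) (y : ℝ) :
    HasDerivAt (fun z : ℝ => Real.sqrt (z ^ 2 + c)) (y / Real.sqrt (y ^ 2 + c)) y := by
  have hinner : HasDerivAt (fun z : ℝ => z ^ 2 + c) (2 * y) y := by
    simpa using (hasDerivAt_pow 2 y).add_const c
  have hpos : (0:ℝ) < y ^ 2 + c := by positivity
  have h := (Real.hasDerivAt_sqrt hpos.ne').comp y hinner
  refine h.congr_deriv (Eq.symm ?_)
  field_simp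

lemma sqrt_sq_add_pos (c : ℝ) (hc : 0 < c) (y : ℝ) : 0 < Real.sqrt (y ^ 2 + c) :=
  Real.sqrt_pos.2 (by positivity)

lemma sq_sqrt_sq_add (c : ℝ) (hc : 0 < c) (y : ℝ) :
    (Real.sqrt (y ^ 2 + c)) ^ 2 = y ^ 2 + c :=
  Real.sq_sqrt (by positivity)

/-- Birnbaum: `(√(x²+4) - x)·φ(x) < 2·Φ̄(x)` for all `x`. -/
lemma birnbaum (x : ℝ) : (Real.sqrt (x ^ 2 + 4) - x) * gphi x < 2 * Phibar x := by
  have h := pos_of_deriv_neg_tendsto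
    (f := fun y => Phibar y - (Real.sqrt (y ^ 2 + 4) - y) / 2 * gphi y)
    (f' := fun y => -gphi y -
      ((y / Real.sqrt (y ^ 2 + 4) - 1) / 2 * gphi y +
        (Real.sqrt (y ^ 2 + 4) - y) / 2 * (-y * gphi y))) (x := x)
    (fun y _ => by
      have hq := ((hasDerivAt_sqrt_sq_add 4 (by norm_num) y).sub (hasDerivAt_id y)).div_const 2
      exact (hasDerivAt_Phibar y).sub (hq.mul (hasDerivAt_gphi y)))
    (fun y _ => by
      set t := Real.sqrt (y ^ 2 + 4) with htdef
      have htpos : 0 < t := sqrt_sq_add_pos 4 (by norm_num) y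
      have ht2 : t ^ 2 = y ^ 2 + 4 := sq_sqrt_sq_add 4 (by norm_num) y
      have hphi := gphi_pos y
      have key : (1 + y ^ 2) ^ 2 * t ^ 2 - (y ^ 3 + 3 * y) ^ 2 = 4 := by rw [ht2]; ring
      have hmain : y ^ 3 + 3 * y < (1 + y ^ 2) * t := by
        nlinarith [sq_nonneg (y ^ 3 + 3 * y + (1 + y ^ 2) * t), mul_pos (by positivity : (0:ℝ) < 1 + y ^ 2) htpos]
      have expand : -gphi y - ((y / t - 1) / 2 * gphi y + (t - y) / 2 * (-y * gphi y))
          = gphi y * ((y ^ 3 + 3 * y) - (1 + y ^ 2) * t) / (2 * t) := by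
        field_simp
        linear_combination y * ht2
      rw [expand]
      apply div_neg_of_neg_of_pos
      · apply mul_neg_of_pos_of_neg hphi
        linarith
      · linarith)
    (by
      have hb : Tendsto (fun y => (Real.sqrt (y ^ 2 + 4) - y) / 2 * gphi y) atTop (𝓝 0) := by
        apply squeeze_zero' (g := gphi)
        · filter_upwards [eventually_ge_atTop (0:ℝ)] with y hy
          have htpos : 0 < Real.sqrt (y ^ 2 + 4) := sqrt_sq_add_pos 4 (by norm_num) y
          have : y ≤ Real.sqrt (y ^ 2 + 4) := by
            nlinarith [sq_sqrt_sq_add 4 (by norm_num : (0:ℝ) < 4) y]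
          have h5 : 0 ≤ (Real.sqrt (y ^ 2 + 4) - y) / 2 := by linarith
          exact mul_nonneg h5 (gphi_pos y).le
        · filter_upwards [eventually_ge_atTop (0:ℝ)] with y hy
          have htpos : 0 < Real.sqrt (y ^ 2 + 4) := sqrt_sq_add_pos 4 (by norm_num) y
          have ht2 := sq_sqrt_sq_add 4 (by norm_num : (0:ℝ) < 4) y
          have hb : (Real.sqrt (y ^ 2 + 4) - y) / 2 ≤ 1 := by nlinarith
          nlinarith [gphi_pos y]
        · exact tendsto_gphi_atTop
      simpa using tendsto_Phibar_atTop.sub hb)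
  have htpos : 0 < Real.sqrt (x ^ 2 + 4) := sqrt_sq_add_pos 4 (by norm_num) x
  linarith [h]
lemma denom_pos {y : ℝ} (hy : -1 < y) : 0 < 3 * y + Real.sqrt (y ^ 2 + 8) := by
  have hs := sqrt_sq_add_pos 8 (by norm_num) y
  have hs2 := sq_sqrt_sq_add 8 (by norm_num) y
  rcases le_or_gt 0 y with h | h
  · linarith
  · nlinarith

/-- Boyd-type upper bound: `(3x + √(x²+8))·Φ̄(x) < 4·φ(x)` for all `x`. -/
lemma boyd (x : ℝ) : (3 * x + Real.sqrt (x ^ 2 + 8)) * Phibar x < 4 * gphi x := by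
  rcases le_or_gt x (-1) with hx | hx
  · have hs2 := sq_sqrt_sq_add 8 (by norm_num) x
    have hs := sqrt_sq_add_pos 8 (by norm_num) x
    have h1 : 3 * x + Real.sqrt (x ^ 2 + 8) ≤ 0 := by nlinarith
    have := mul_nonpos_of_nonpos_of_nonneg h1 (Phibar_pos x).le
    nlinarith [gphi_pos x]
  · have h := pos_of_deriv_neg_tendsto
      (f := fun y => 4 / (3 * y + Real.sqrt (y ^ 2 + 8)) * gphi y - Phibar y)
      (f' := fun y =>
        ((0 * (3 * y + Real.sqrt (y ^ 2 + 8)) - 4 * (3 + y / Real.sqrt (y ^ 2 + 8)))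
            / (3 * y + Real.sqrt (y ^ 2 + 8)) ^ 2 * gphi y
          + 4 / (3 * y + Real.sqrt (y ^ 2 + 8)) * (-y * gphi y)) - - gphi y) (x := x)
      (fun y hy => by
        have hy1 : -1 < y := lt_of_lt_of_le hx hy
        have hden := denom_pos hy1
        have hu : HasDerivAt (fun z : ℝ => 3 * z + Real.sqrt (z ^ 2 + 8))
            (3 + y / Real.sqrt (y ^ 2 + 8)) y := by
          have := ((hasDerivAt_id y).const_mul 3).add (hasDerivAt_sqrt_sq_add 8 (by norm_num) y)
          exact this.congr_deriv (by ring)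
        have hq : HasDerivAt (fun z : ℝ => 4 / (3 * z + Real.sqrt (z ^ 2 + 8)))
            ((0 * (3 * y + Real.sqrt (y ^ 2 + 8)) - 4 * (3 + y / Real.sqrt (y ^ 2 + 8)))
              / (3 * y + Real.sqrt (y ^ 2 + 8)) ^ 2) y :=
          (hasDerivAt_const y 4).div hu hden.ne'
        exact (hq.mul (hasDerivAt_gphi y)).sub (hasDerivAt_Phibar y))
      (fun y hy => by
        have hy1 : -1 < y := lt_of_lt_of_le hx hy
        set s := Real.sqrt (y ^ 2 + 8) with hsdef
        have hspos : 0 < s := sqrt_sq_add_pos 8 (by norm_num) y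
        have hs2 : s ^ 2 = y ^ 2 + 8 := sq_sqrt_sq_add 8 (by norm_num) y
        have hden : 0 < 3 * y + s := denom_pos hy1
        have hphi := gphi_pos y
        have key : (y ^ 2 + 2) ^ 2 * s ^ 2 - (y ^ 3 + 6 * y) ^ 2 = 32 := by rw [hs2]; ring
        have hmain : y ^ 3 + 6 * y < (y ^ 2 + 2) * s := by
          nlinarith [sq_nonneg (y ^ 3 + 6 * y + (y ^ 2 + 2) * s),
            mul_pos (by positivity : (0:ℝ) < y ^ 2 + 2) hspos]
        have expand : (0 * (3 * y + s) - 4 * (3 + y / s)) / (3 * y + s) ^ 2 * gphi y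
            + 4 / (3 * y + s) * (-y * gphi y) - - gphi y
            = gphi y * (2 * (y ^ 3 + 6 * y) - 2 * (y ^ 2 + 2) * s) / (s * (3 * y + s) ^ 2) := by
          field_simp
          linear_combination (s + 2 * y) * hs2
        rw [expand]
        apply div_neg_of_neg_of_pos
        · apply mul_neg_of_pos_of_neg hphi
          linarith
        · exact mul_pos hspos (pow_pos hden 2))
      (by
        have hb : Tendsto (fun y => 4 / (3 * y + Real.sqrt (y ^ 2 + 8)) * gphi y) atTop (𝓝 0) := by
          apply squeeze_zero' (g := fun y => 2 * gphi y)
          · filter_upwards [eventually_ge_atTop (0:ℝ)] with y hy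
            have hden := denom_pos (by linarith : (-1:ℝ) < y)
            exact mul_nonneg (div_nonneg (by norm_num) hden.le) (gphi_pos y).le
          · filter_upwards [eventually_ge_atTop (0:ℝ)] with y hy
            have hspos : 0 < Real.sqrt (y ^ 2 + 8) := sqrt_sq_add_pos 8 (by norm_num) y
            have hs2 : (Real.sqrt (y ^ 2 + 8)) ^ 2 = y ^ 2 + 8 := sq_sqrt_sq_add 8 (by norm_num) y
            have hden := denom_pos (by linarith : (-1:ℝ) < y)
            have h4 : 4 / (3 * y + Real.sqrt (y ^ 2 + 8)) ≤ 2 := by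
              rw [div_le_iff₀ hden]
              nlinarith
            nlinarith [gphi_pos y]
          · simpa using tendsto_gphi_atTop.const_mul 2
        simpa using hb.sub tendsto_Phibar_atTop)
    have h2 : 0 < 4 / (3 * x + Real.sqrt (x ^ 2 + 8)) * gphi x - Phibar x := h
    have hden := denom_pos hx
    rw [sub_pos, div_mul_eq_mul_div, lt_div_iff₀ hden] at h2
    linarith [mul_comm (Phibar x) (3 * x + Real.sqrt (x ^ 2 + 8))]
lemma gaussE_pos (x : ℝ) : 0 < gaussE x := div_pos (gphi_pos x) (Phibar_pos x)

lemma lt_gaussE (x : ℝ) : x < gaussE x :=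
  (lt_div_iff₀ (Phibar_pos x)).2 (xPhibar_lt_gphi x)

lemma gaussE_lt_birnbaum (x : ℝ) : gaussE x < (x + Real.sqrt (x ^ 2 + 4)) / 2 := by
  set t := Real.sqrt (x ^ 2 + 4) with htdef
  have htpos : 0 < t := sqrt_sq_add_pos 4 (by norm_num) x
  have ht2 : t ^ 2 = x ^ 2 + 4 := sq_sqrt_sq_add 4 (by norm_num) x
  have htx : 0 < t - x := by nlinarith
  have h := birnbaum x
  have h2 : gaussE x * (t - x) < 2 := by
    rw [gaussE, div_mul_eq_mul_div, div_lt_iff₀ (Phibar_pos x)]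
    nlinarith
  nlinarith

lemma boyd_lt_gaussE (x : ℝ) : (3 * x + Real.sqrt (x ^ 2 + 8)) / 4 < gaussE x := by
  have h := boyd x
  rw [gaussE]
  rw [div_lt_div_iff₀ (by norm_num) (Phibar_pos x)]
  nlinarith

/-- (b) strict bounds on `E' = E(E-x)`. -/
lemma deriv_expr_mem (x : ℝ) : gaussE x * (gaussE x - x) ∈ Set.Ioo (0:ℝ) 1 := by
  have hE := gaussE_pos x
  have hx := lt_gaussE x
  constructor
  · exact mul_pos hE (by linarith)
  · set t := Real.sqrt (x ^ 2 + 4) with htdef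
    have htpos : 0 < t := sqrt_sq_add_pos 4 (by norm_num) x
    have ht2 : t ^ 2 = x ^ 2 + 4 := sq_sqrt_sq_add 4 (by norm_num) x
    have h1 := gaussE_lt_birnbaum x
    nlinarith

/-- (c) positivity of the bracket. -/
lemma bracket_pos (x : ℝ) : 0 < (2 * gaussE x - x) * (gaussE x - x) - 1 := by
  set s := Real.sqrt (x ^ 2 + 8) with hsdef
  have hspos : 0 < s := sqrt_sq_add_pos 8 (by norm_num) x
  have hs2 : s ^ 2 = x ^ 2 + 8 := sq_sqrt_sq_add 8 (by norm_num) x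
  have h := boyd_lt_gaussE x
  have hE := gaussE_pos x
  nlinarith

lemma hasDerivAt_gaussE (x : ℝ) :
    HasDerivAt gaussE (gaussE x * (gaussE x - x)) x := by
  have h := (hasDerivAt_gphi x).div (hasDerivAt_Phibar x) (Phibar_pos x).ne'
  refine h.congr_deriv (Eq.symm ?_)
  have hP := (Phibar_pos x).ne'
  rw [gaussE]
  field_simp
  ring

lemma deriv_gaussE_eq : deriv gaussE = fun x => gaussE x * (gaussE x - x) :=
  funext fun x => (hasDerivAt_gaussE x).deriv

lemma hasDerivAt_gaussE' (x : ℝ) :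
    HasDerivAt (fun y => gaussE y * (gaussE y - y))
      (gaussE x * ((2 * gaussE x - x) * (gaussE x - x) - 1)) x := by
  have h := (hasDerivAt_gaussE x).mul ((hasDerivAt_gaussE x).sub (hasDerivAt_id x))
  refine h.congr_deriv (Eq.symm ?_)
  simp only [Pi.sub_apply, Pi.mul_apply, id_eq]
  ring

lemma iteratedDeriv_two_gaussE :
    iteratedDeriv 2 gaussE = fun x => gaussE x * ((2 * gaussE x - x) * (gaussE x - x) - 1) := by
  have h2 : iteratedDeriv 2 gaussE = deriv (deriv gaussE) := by
    rw [iteratedDeriv_succ, iteratedDeriv_one]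
  rw [h2, deriv_gaussE_eq]
  exact funext fun x => (hasDerivAt_gaussE' x).deriv

lemma hasDerivAt_gaussE'' (x : ℝ) :
    HasDerivAt (fun y => gaussE y * ((2 * gaussE y - y) * (gaussE y - y) - 1))
      (-(2 * (1 - gaussE x * (gaussE x - x)) * (gaussE x * (gaussE x - x)))
        + (2 * gaussE x - x) * (gaussE x * ((2 * gaussE x - x) * (gaussE x - x) - 1))) x := by
  have h := (hasDerivAt_gaussE x).mul
    ((((hasDerivAt_gaussE x).const_mul 2).sub (hasDerivAt_id x)).mul
        ((hasDerivAt_gaussE x).sub (hasDerivAt_id x)) |>.sub_const 1)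
  refine h.congr_deriv (Eq.symm ?_)
  simp only [Pi.sub_apply, Pi.mul_apply, id_eq]
  ring

lemma iteratedDeriv_three_gaussE :
    iteratedDeriv 3 gaussE = fun x =>
      -(2 * (1 - gaussE x * (gaussE x - x)) * (gaussE x * (gaussE x - x)))
        + (2 * gaussE x - x) * (gaussE x * ((2 * gaussE x - x) * (gaussE x - x) - 1)) := by
  have h2 : iteratedDeriv 3 gaussE = deriv (iteratedDeriv 2 gaussE) := by
    rw [iteratedDeriv_succ]
  rw [h2, iteratedDeriv_two_gaussE]
  exact funext fun x => (hasDerivAt_gaussE'' x).deriv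
lemma gphi_eq : gphi = fun u => Real.exp (-(1/2) * u ^ 2) / Real.sqrt (2 * Real.pi) := by
  funext u; rw [gphi]; ring_nf

lemma integral_gphi : ∫ u, gphi u = 1 := by
  rw [gphi_eq]
  rw [MeasureTheory.integral_div, integral_gaussian]
  rw [show Real.pi / (1/2) = 2 * Real.pi by ring]
  rw [div_self (ne_of_gt (Real.sqrt_pos.2 (by positivity)))]

lemma Phibar_zero : Phibar 0 = 1/2 := by
  unfold Phibar
  rw [gphi_eq]
  rw [MeasureTheory.integral_div, integral_gaussian_Ioi]
  rw [show Real.pi / (1/2) = 2 * Real.pi by ring]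
  rw [div_div, div_eq_iff (by positivity)]
  ring

lemma Phibar_neg (x : ℝ) : Phibar (-x) = 1 - Phibar x := by
  have hsym : Phibar (-x) = ∫ u in Iic x, gphi u := by
    have h0 : ∫ u in Iic x, gphi (-u) = ∫ u in Ioi (-x), gphi u := integral_comp_neg_Iic x gphi
    unfold Phibar
    rw [← h0]
    congr 1
    funext u
    rw [gphi, gphi, neg_pow]
    norm_num
  have hsplit := MeasureTheory.integral_add_compl (measurableSet_Iic (a := x)) integrable_gphi
  rw [compl_Iic] at hsplit
  have : (∫ u in Iic x, gphi u) + Phibar x = 1 := by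
    unfold Phibar; rw [hsplit, integral_gphi]
  linarith [hsym ▸ this]

lemma strictAnti_Phibar : StrictAnti Phibar :=
  strictAnti_of_hasDerivAt_neg (f' := fun x => -gphi x) hasDerivAt_Phibar
    fun x => neg_neg_iff_pos.2 (gphi_pos x)

lemma Phibar_ge_half {x : ℝ} (hx : x ≤ 0) : 1/2 ≤ Phibar x := by
  rcases eq_or_lt_of_le hx with rfl | h
  · rw [Phibar_zero]
  · rw [← Phibar_zero]; exact (strictAnti_Phibar h).le

lemma strictMono_gaussE : StrictMono gaussE :=
  strictMono_of_hasDerivAt_pos (f' := fun x => gaussE x * (gaussE x - x)) hasDerivAt_gaussE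
    fun x => (deriv_expr_mem x).1

lemma exp_neg_le {y : ℝ} (hy : 0 ≤ y) :
    Real.exp (-y) ≤ (1 + y + y^2/2 + y^3/6 + y^4/24)⁻¹ := by
  rw [Real.exp_neg]
  have hpos : 0 < 1 + y + y^2/2 + y^3/6 + y^4/24 := by positivity
  apply inv_anti₀ hpos
  have h := Real.sum_le_exp_of_nonneg hy 5
  norm_num [Finset.sum_range_succ, Nat.factorial] at h
  linarith

lemma sqrt2pi_ge : (2.5066 : ℝ) ≤ Real.sqrt (2 * Real.pi) := by
  rw [show (2.5066:ℝ) = Real.sqrt (2.5066^2) by rw [Real.sqrt_sq (by norm_num)]]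
  apply Real.sqrt_le_sqrt
  nlinarith [Real.pi_gt_d6]

lemma gphi_le (a : ℝ) : gphi a ≤ 0.399 * Real.exp (-(a^2/2)) := by
  rw [gphi, neg_div]
  rw [div_le_iff₀ (Real.sqrt_pos.2 (by positivity))]
  have h1 := Real.exp_pos (-(a^2/2))
  nlinarith [sqrt2pi_ge]

/-- Numeric upper bound on `gphi a` via the degree-4 lower bound on `exp`. -/
lemma gphi_le_num (a : ℝ) (ha : 0 ≤ a) :
    gphi a ≤ 0.399 * (1 + a^2/2 + (a^2/2)^2/2 + (a^2/2)^3/6 + (a^2/2)^4/24)⁻¹ := by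
  have h := gphi_le a
  have h2 := exp_neg_le (show (0:ℝ) ≤ a^2/2 by positivity)
  nlinarith [Real.exp_pos (-(a^2/2))]
lemma gphi_neg (x : ℝ) : gphi (-x) = gphi x := by
  rw [gphi, gphi, neg_pow]; norm_num

lemma gaussE_zero_le : gaussE 0 ≤ 0.798 := by
  rw [gaussE, Phibar_zero]
  have h := gphi_le 0
  norm_num at h ⊢
  linarith

/-- bin helper : upper bound for `gaussE (-a)` from the Boyd bound at `a`. -/
lemma gaussE_neg_le {a pa slb c : ℝ} (ha : 0 ≤ a) (hpa : gphi a ≤ pa)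
    (hslb : 0 < slb) (hs2 : slb ^ 2 ≤ a ^ 2 + 8)
    (hB : 4 * pa < 3 * a + slb)
    (hc : pa * (3 * a + slb) ≤ c * ((3 * a + slb) - 4 * pa)) :
    gaussE (-a) ≤ c := by
  have hs : slb ≤ Real.sqrt (a ^ 2 + 8) := by
    have h2 := sq_sqrt_sq_add 8 (by norm_num) a
    have h3 := sqrt_sq_add_pos 8 (by norm_num) a
    nlinarith
  have hden : 0 < 3 * a + slb := by linarith [gphi_pos a]
  have hden2 : 0 < 3 * a + Real.sqrt (a ^ 2 + 8) := by linarith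
  -- Phibar a < 4 pa / (3a + slb)
  have h1 : Phibar a < 4 * pa / (3 * a + slb) := by
    rw [lt_div_iff₀ hden]
    have hb := boyd a
    have h4 : (3 * a + slb) * Phibar a ≤ (3 * a + Real.sqrt (a ^ 2 + 8)) * Phibar a :=
      mul_le_mul_of_nonneg_right (by linarith) (Phibar_pos a).le
    have h5 : 4 * gphi a ≤ 4 * pa := by linarith
    linarith [mul_comm (Phibar a) (3 * a + slb)]
  have hPa : 1 - 4 * pa / (3 * a + slb) < Phibar (-a) := by
    rw [Phibar_neg]; linarith
  have hpos : 0 < 1 - 4 * pa / (3 * a + slb) := by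
    rw [sub_pos, div_lt_one hden]; exact hB
  have hE : gaussE (-a) ≤ gphi a / (1 - 4 * pa / (3 * a + slb)) := by
    rw [gaussE, gphi_neg]
    exact div_le_div_of_nonneg_left (gphi_pos a).le hpos (by linarith)
  refine le_trans hE ?_
  rw [div_le_iff₀ hpos]
  have expand : c * (1 - 4 * pa / (3 * a + slb)) = c * ((3 * a + slb) - 4 * pa) / (3 * a + slb) := by
    field_simp
  rw [expand, le_div_iff₀ hden]
  calc gphi a * (3 * a + slb) ≤ pa * (3 * a + slb) :=
        mul_le_mul_of_nonneg_right hpa hden.le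
    _ ≤ c * ((3 * a + slb) - 4 * pa) := hc

/-- generic bin conclusion for `E'' < 1`. -/
lemma bin_second {x c b2 : ℝ} (hc : 0 < c) (hEc : gaussE x ≤ c) (hxb : -b2 ≤ x) (hx0 : x ≤ 0)
    (hfinal : c * ((2*c+b2)*(c+b2) - 1) < 1) :
    gaussE x * ((2 * gaussE x - x) * (gaussE x - x) - 1) < 1 := by
  have hE := gaussE_pos x
  have hxE := lt_gaussE x
  have hbr := bracket_pos x
  have h1 : 2 * gaussE x - x ≤ 2*c + b2 := by linarith
  have h2 : gaussE x - x ≤ c + b2 := by linarith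
  have h3 : (2 * gaussE x - x) * (gaussE x - x) ≤ (2*c+b2)*(c+b2) :=
    mul_le_mul h1 h2 (by linarith) (by linarith)
  have h4 : gaussE x * ((2 * gaussE x - x) * (gaussE x - x) - 1)
      ≤ c * ((2*c+b2)*(c+b2) - 1) :=
    mul_le_mul hEc (by linarith) (by linarith) hc.le
  linarith

lemma gaussE_le_D {x : ℝ} (hx : x ≤ 0) :
    gaussE x * (1 + x^2/2 + (x^2/2)^2/2 + (x^2/2)^3/6 + (x^2/2)^4/24) ≤ 0.8 := by
  have h1 : gaussE x ≤ 2 * gphi x := by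
    rw [gaussE]
    rw [div_le_iff₀ (Phibar_pos x)]
    have h2 := Phibar_ge_half hx
    nlinarith [gphi_pos x]
  have h3 : gphi x ≤ 0.399 * (1 + x^2/2 + (x^2/2)^2/2 + (x^2/2)^3/6 + (x^2/2)^4/24)⁻¹ := by
    have := gphi_le_num (-x) (by linarith)
    rw [gphi_neg] at this
    convert this using 4 <;> ring
  have hD : (0:ℝ) < 1 + x^2/2 + (x^2/2)^2/2 + (x^2/2)^3/6 + (x^2/2)^4/24 := by positivity
  have h4 : gphi x * (1 + x^2/2 + (x^2/2)^2/2 + (x^2/2)^3/6 + (x^2/2)^4/24) ≤ 0.399 := by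
    rw [← le_div_iff₀ hD]
    rw [div_eq_mul_inv]
    linarith
  nlinarith [gphi_pos x, (mul_le_mul_of_nonneg_right h1 hD.le)]

/-- `E'' < 1` for `x ≤ 0`. -/
lemma second_lt_one_neg {x : ℝ} (hx : x ≤ 0) :
    gaussE x * ((2 * gaussE x - x) * (gaussE x - x) - 1) < 1 := by
  rcases le_or_gt (-(1/4)) x with h | h
  · -- bin [ -1/4, 0 ] : E ≤ E 0 ≤ 0.798
    have hEc : gaussE x ≤ 0.798 := le_trans (strictMono_gaussE.monotone hx) gaussE_zero_le
    exact bin_second (by norm_num) hEc h hx (by norm_num)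
  rcases le_or_gt (-(1/2)) x with h2 | h2
  · have hEc : gaussE x ≤ 0.67962 := by
      refine le_trans (strictMono_gaussE.monotone (show x ≤ -(1/4) by linarith)) ?_
      exact gaussE_neg_le (a:=1/4) (pa:=0.386725) (slb:=2.8394) (c:=0.67962) (by norm_num)
        (le_trans (gphi_le_num (1/4) (by norm_num)) (by norm_num))
        (by norm_num) (by norm_num) (by norm_num) (by norm_num)
    exact bin_second (by norm_num) hEc h2 hx (by norm_num)
  rcases le_or_gt (-(3/4)) x with h3 | h3
  · have hEc : gaussE x ≤ 0.51946 := by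
      refine le_trans (strictMono_gaussE.monotone (show x ≤ -(1/2) by linarith)) ?_
      exact gaussE_neg_le (a:=1/2) (pa:=0.352117) (slb:=2.8722) (c:=0.51946) (by norm_num)
        (le_trans (gphi_le_num (1/2) (by norm_num)) (by norm_num))
        (by norm_num) (by norm_num) (by norm_num) (by norm_num)
    exact bin_second (by norm_num) hEc h3 hx (by norm_num)
  rcases le_or_gt (-1) x with h4 | h4
  · have hEc : gaussE x ≤ 0.39256 := by
      refine le_trans (strictMono_gaussE.monotone (show x ≤ -(3/4) by linarith)) ?_
      exact gaussE_neg_le (a:=3/4) (pa:=0.301185) (slb:=2.9261) (c:=0.39256) (by norm_num)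
        (le_trans (gphi_le_num (3/4) (by norm_num)) (by norm_num))
        (by norm_num) (by norm_num) (by norm_num) (by norm_num)
    exact bin_second (by norm_num) hEc h4 hx (by norm_num)
  rcases le_or_gt (-(3/2)) x with h5 | h5
  · have hEc : gaussE x ≤ 0.28863 := by
      refine le_trans (strictMono_gaussE.monotone (show x ≤ -1 by linarith)) ?_
      exact gaussE_neg_le (a:=1) (pa:=0.242048) (slb:=3) (c:=0.28863) (by norm_num)
        (le_trans (gphi_le_num (1) (by norm_num)) (by norm_num))
        (by norm_num) (by norm_num) (by norm_num) (by norm_num)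
    exact bin_second (by norm_num) hEc h5 hx (by norm_num)
  rcases le_or_gt (-2) x with h6 | h6
  · have hEc : gaussE x ≤ 0.13978 := by
      refine le_trans (strictMono_gaussE.monotone (show x ≤ -(3/2) by linarith)) ?_
      exact gaussE_neg_le (a:=3/2) (pa:=0.130313) (slb:=3.2015) (c:=0.13978) (by norm_num)
        (le_trans (gphi_le_num (3/2) (by norm_num)) (by norm_num))
        (by norm_num) (by norm_num) (by norm_num) (by norm_num)
    exact bin_second (by norm_num) hEc h6 hx (by norm_num)
  rcases le_or_gt (-3) x with h7 | h7
  · have hEc : gaussE x ≤ 0.05841 := by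
      refine le_trans (strictMono_gaussE.monotone (show x ≤ -2 by linarith)) ?_
      exact gaussE_neg_le (a:=2) (pa:=0.057001) (slb:=3.4641) (c:=0.05841) (by norm_num)
        (le_trans (gphi_le_num (2) (by norm_num)) (by norm_num))
        (by norm_num) (by norm_num) (by norm_num) (by norm_num)
    exact bin_second (by norm_num) hEc h7 hx (by norm_num)
  · -- tail x < -3
    have hE := gaussE_pos x
    have hxE := lt_gaussE x
    have hbr := bracket_pos x
    have hD := gaussE_le_D hx
    have hE8 : gaussE x ≤ 0.8 := by
      nlinarith [mul_nonneg hE.le (show (0:ℝ) ≤ x^2/2 + (x^2/2)^2/2 + (x^2/2)^3/6 + (x^2/2)^4/24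
        by positivity)]
    have h1 : 2 * gaussE x - x ≤ 1.6 - x := by linarith
    have h2 : gaussE x - x ≤ 0.8 - x := by linarith
    have h3 : (2 * gaussE x - x) * (gaussE x - x) ≤ (1.6 - x) * (0.8 - x) :=
      mul_le_mul h1 h2 (by linarith) (by linarith)
    have h4 : gaussE x * ((2 * gaussE x - x) * (gaussE x - x) - 1)
        ≤ gaussE x * ((1.6 - x) * (0.8 - x)) :=
      mul_le_mul_of_nonneg_left (by linarith) hE.le
    refine lt_of_le_of_lt h4 ?_
    have hDpos : (0:ℝ) < 1 + x^2/2 + (x^2/2)^2/2 + (x^2/2)^3/6 + (x^2/2)^4/24 := by positivity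
    rw [← mul_lt_mul_iff_left₀ hDpos]
    have h5 : gaussE x * ((1.6 - x) * (0.8 - x))
          * (1 + x^2/2 + (x^2/2)^2/2 + (x^2/2)^3/6 + (x^2/2)^4/24)
        ≤ 0.8 * ((1.6 - x) * (0.8 - x)) := by
      have hstuff : (0:ℝ) ≤ (1.6 - x) * (0.8 - x) := by nlinarith
      calc gaussE x * ((1.6 - x) * (0.8 - x))
            * (1 + x^2/2 + (x^2/2)^2/2 + (x^2/2)^3/6 + (x^2/2)^4/24)
          = (gaussE x * (1 + x^2/2 + (x^2/2)^2/2 + (x^2/2)^3/6 + (x^2/2)^4/24))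
            * ((1.6 - x) * (0.8 - x)) := by ring
        _ ≤ 0.8 * ((1.6 - x) * (0.8 - x)) := mul_le_mul_of_nonneg_right hD hstuff
    refine lt_of_le_of_lt h5 ?_
    nlinarith [sq_nonneg x, sq_nonneg (x + 3)]
/-- `E'' ≤ (√(x²+4) - x)/2` for `x ≥ 0`, in particular `E'' < 1` and `(2E-x)E'' < 2`. -/
lemma second_third_pos {x : ℝ} (hx : 0 ≤ x) :
    gaussE x * ((2 * gaussE x - x) * (gaussE x - x) - 1) < 1 ∧
    (2 * gaussE x - x) * (gaussE x * ((2 * gaussE x - x) * (gaussE x - x) - 1)) < 2 := by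
  set t := Real.sqrt (x ^ 2 + 4) with htdef
  have htpos : 0 < t := sqrt_sq_add_pos 4 (by norm_num) x
  have ht2 : t ^ 2 = x ^ 2 + 4 := sq_sqrt_sq_add 4 (by norm_num) x
  have hE := gaussE_pos x
  have hxE := lt_gaussE x
  have hbr := bracket_pos x
  have hEb := gaussE_lt_birnbaum x
  have ht2' : 2 ≤ t := by nlinarith
  have h1 : 2 * gaussE x - x < t := by linarith
  have h2 : gaussE x - x < (t - x) / 2 := by linarith
  have h1p : 0 < 2 * gaussE x - x := by nlinarith
  have h2p : 0 < gaussE x - x := by linarith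
  have h3 : (2 * gaussE x - x) * (gaussE x - x) < t * ((t - x) / 2) :=
    mul_lt_mul'' h1 h2 h1p.le h2p.le
  have h4 : (2 * gaussE x - x) * (gaussE x - x) - 1 < t * (t - x) / 2 - 1 := by linarith
  have h5 : gaussE x * ((2 * gaussE x - x) * (gaussE x - x) - 1)
      < (x + t) / 2 * (t * (t - x) / 2 - 1) :=
    mul_lt_mul'' hEb h4 hE.le hbr.le
  have key : (x + t) / 2 * (t * (t - x) / 2 - 1) = (t - x) / 2 := by
    have : t ^ 2 * t = (x ^ 2 + 4) * t := by rw [ht2]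
    nlinarith [ht2]
  constructor
  · rw [key] at h5
    have : t ≤ x + 2 := by nlinarith
    linarith
  · have h5' : gaussE x * ((2 * gaussE x - x) * (gaussE x - x) - 1) < (t - x) / 2 := by
      rw [key] at h5; exact h5
    have h6 := mul_lt_mul'' h1 h5' h1p.le (mul_pos hE hbr).le
    have h7 : t * ((t - x) / 2) ≤ 2 := by nlinarith
    linarith

/-- `(2E - x)·E'' < 13` for `x ≤ 0`. -/
lemma third_lt_neg {x : ℝ} (hx : x ≤ 0) :
    (2 * gaussE x - x) * (gaussE x * ((2 * gaussE x - x) * (gaussE x - x) - 1)) < 13 := by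
  have hE := gaussE_pos x
  have hxE := lt_gaussE x
  have hbr := bracket_pos x
  have hD := gaussE_le_D hx
  have hE8 : gaussE x ≤ 0.8 := by
    nlinarith [mul_nonneg hE.le (show (0:ℝ) ≤ x^2/2 + (x^2/2)^2/2 + (x^2/2)^3/6 + (x^2/2)^4/24
      by positivity)]
  have h1 : 2 * gaussE x - x ≤ 1.6 - x := by linarith
  have h2 : gaussE x - x ≤ 0.8 - x := by linarith
  have h1p : 0 < 2 * gaussE x - x := by nlinarith
  have h3 : (2 * gaussE x - x) * (gaussE x - x) ≤ (1.6 - x) * (0.8 - x) :=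
    mul_le_mul h1 h2 (by linarith) (by linarith)
  have h4 : (2 * gaussE x - x) * (gaussE x * ((2 * gaussE x - x) * (gaussE x - x) - 1))
      ≤ (1.6 - x) * (gaussE x * ((1.6 - x) * (0.8 - x))) := by
    have hq : gaussE x * ((2 * gaussE x - x) * (gaussE x - x) - 1)
        ≤ gaussE x * ((1.6 - x) * (0.8 - x)) := mul_le_mul_of_nonneg_left (by linarith) hE.le
    exact mul_le_mul h1 hq (mul_pos hE hbr).le (by linarith)
  refine lt_of_le_of_lt h4 ?_
  have hDpos : (0:ℝ) < 1 + x^2/2 + (x^2/2)^2/2 + (x^2/2)^3/6 + (x^2/2)^4/24 := by positivity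
  rw [← mul_lt_mul_iff_left₀ hDpos]
  have hstuff : (0:ℝ) ≤ (1.6 - x) * ((1.6 - x) * (0.8 - x)) := by nlinarith
  have h5 : (1.6 - x) * (gaussE x * ((1.6 - x) * (0.8 - x)))
        * (1 + x^2/2 + (x^2/2)^2/2 + (x^2/2)^3/6 + (x^2/2)^4/24)
      ≤ 0.8 * ((1.6 - x) * ((1.6 - x) * (0.8 - x))) := by
    calc (1.6 - x) * (gaussE x * ((1.6 - x) * (0.8 - x)))
          * (1 + x^2/2 + (x^2/2)^2/2 + (x^2/2)^3/6 + (x^2/2)^4/24)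
        = (gaussE x * (1 + x^2/2 + (x^2/2)^2/2 + (x^2/2)^3/6 + (x^2/2)^4/24))
          * ((1.6 - x) * ((1.6 - x) * (0.8 - x))) := by ring
      _ ≤ 0.8 * ((1.6 - x) * ((1.6 - x) * (0.8 - x))) := mul_le_mul_of_nonneg_right hD hstuff
  refine lt_of_le_of_lt h5 ?_
  nlinarith [sq_nonneg x, sq_nonneg (x*x), sq_nonneg (x^2 - 2), sq_nonneg (x^2+x), sq_nonneg (x+1)]

/-- Lemma 9.1. Properties of `𝓔(x) = φ(x)/Φ̄(x)`:
(a) `max{0,x} < 𝓔(x) < 1 + |x|`; (b) `𝓔'(x) = 𝓔(x)(𝓔(x) - x) ∈ (0,1)`;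
(c) `𝓔''(x) = 𝓔(x)((2𝓔(x) - x)(𝓔(x) - x) - 1) ∈ (0,1)`;
(d) `𝓔'''(x) = -2(1 - 𝓔'(x))𝓔'(x) + (2𝓔(x) - x)𝓔''(x) ∈ (-1/2, 13)`. -/
theorem gaussE_derivative_bounds (x : ℝ) :
    (max 0 x < gaussE x ∧ gaussE x < 1 + |x|) ∧
    (deriv gaussE x = gaussE x * (gaussE x - x) ∧ deriv gaussE x ∈ Set.Ioo (0 : ℝ) 1) ∧
    (iteratedDeriv 2 gaussE x = gaussE x * ((2 * gaussE x - x) * (gaussE x - x) - 1) ∧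
      iteratedDeriv 2 gaussE x ∈ Set.Ioo (0 : ℝ) 1) ∧
    (iteratedDeriv 3 gaussE x
        = -(2 * (1 - deriv gaussE x) * deriv gaussE x)
          + (2 * gaussE x - x) * iteratedDeriv 2 gaussE x ∧
      iteratedDeriv 3 gaussE x ∈ Set.Ioo (-(1/2) : ℝ) 13) := by
  have hE := gaussE_pos x
  have hxE := lt_gaussE x
  have hbr := bracket_pos x
  have hmem := deriv_expr_mem x
  obtain ⟨hp0, hp1⟩ := hmem
  refine ⟨⟨max_lt hE hxE, ?_⟩, ⟨(hasDerivAt_gaussE x).deriv, ?_⟩, ⟨?_, ?_⟩, ⟨?_, ?_⟩⟩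
  · -- E < 1 + |x|
    by_contra hcon
    push_neg at hcon
    rcases abs_cases x with ⟨h1, h2⟩ | ⟨h1, h2⟩ <;> nlinarith
  · rw [(hasDerivAt_gaussE x).deriv]; exact ⟨hp0, hp1⟩
  · rw [iteratedDeriv_two_gaussE]
  · rw [iteratedDeriv_two_gaussE]
    refine ⟨mul_pos hE hbr, ?_⟩
    rcases le_or_gt x 0 with hx | hx
    · exact second_lt_one_neg hx
    · exact (second_third_pos hx.le).1
  · rw [iteratedDeriv_three_gaussE, iteratedDeriv_two_gaussE, deriv_gaussE_eq]
  · rw [iteratedDeriv_three_gaussE]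
    have h2Ex : 0 < 2 * gaussE x - x := by
      rcases le_or_gt x 0 with hx | hx <;> nlinarith
    have hq : 0 < (2 * gaussE x - x) * (gaussE x * ((2 * gaussE x - x) * (gaussE x - x) - 1)) :=
      mul_pos h2Ex (mul_pos hE hbr)
    constructor
    · -- lower bound -1/2
      simp only
      nlinarith [sq_nonneg (1 - 2 * (gaussE x * (gaussE x - x)))]
    · -- upper bound 13
      simp only
      rcases le_or_gt x 0 with hx | hx
      · have h13 := third_lt_neg hx
        nlinarith
      · have h13 := (second_third_pos hx.le).2
        nlinarith
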